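/- Let (V,b) be a real symplectic vector space. Any linear map Φ : V → sp(V,b) with Φ(v)(w) = Φ(w)(v) for all v,w gives rise to a totally symmetric trilinear form T(u,v,w) = b(Φ(u)(v), w); conversely the map Φ ↦ T is a linear isomorphism from the first prolongation sp(V,b)⁽¹⁾ onto the space of totally symmetric trilinear forms on V. In particular sp(V,b)⁽¹⁾ ≅ S³V*. -/

import Mathlib

/-!
STATEMENT 9: For a real symplectic vector space `(V,b)`, each `Φ` in the first
prolongation `sp(V,b)⁽¹⁾` gives a totally symmetric trilinear form
`T(u,v,w) = b(Φ(u)(v), w)`, and `Φ ↦ T` is a linear isomorphism of `sp(V,b)⁽¹⁾`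
onto the totally symmetric trilinear forms on `V`; in particular
`sp(V,b)⁽¹⁾ ≅ S³V*`.
-/

variable {V : Type*} [AddCommGroup V] [Module ℝ V]

/-- Membership of `Φ : V → gl(V)` in the first prolongation of `sp(V,b)`:
all values are in `sp(V,b)` and `Φ(v)(w)` is symmetric in `(v,w)`. -/
def InSpProlong (b : LinearMap.BilinForm ℝ V) (Φ : V →ₗ[ℝ] V →ₗ[ℝ] V) : Prop :=
  (∀ u v w : V, b (Φ u v) w + b v (Φ u w) = 0) ∧ (∀ v w : V, Φ v w = Φ w v)

theorem stmt9 [FiniteDimensional ℝ V]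
    (b : LinearMap.BilinForm ℝ V) (hAlt : LinearMap.BilinForm.IsAlt b)
    (hNd : LinearMap.BilinForm.Nondegenerate b) :
    -- the associated trilinear form `T(u,v,w) = b(Φ(u)(v),w)` is totally symmetric
    (∀ Φ : V →ₗ[ℝ] V →ₗ[ℝ] V, InSpProlong b Φ →
      ∀ u v w : V, b (Φ u v) w = b (Φ v u) w ∧ b (Φ u v) w = b (Φ u w) v) ∧
    -- `Φ ↦ T` is linear …
    (∀ (Φ Ψ : V →ₗ[ℝ] V →ₗ[ℝ] V) (c : ℝ) (u v w : V),
      b ((Φ + c • Ψ) u v) w = b (Φ u v) w + c * b (Ψ u v) w) ∧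
    -- … injective …
    (∀ Φ Ψ : V →ₗ[ℝ] V →ₗ[ℝ] V, InSpProlong b Φ → InSpProlong b Ψ →
      (∀ u v w : V, b (Φ u v) w = b (Ψ u v) w) → Φ = Ψ) ∧
    -- … and surjective onto the totally symmetric trilinear forms
    (∀ T : V →ₗ[ℝ] V →ₗ[ℝ] V →ₗ[ℝ] ℝ,
      (∀ u v w : V, T u v w = T v u w ∧ T u v w = T u w v) →
      ∃ Φ : V →ₗ[ℝ] V →ₗ[ℝ] V, InSpProlong b Φ ∧ ∀ u v w : V, b (Φ u v) w = T u v w) := by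
  have skew : ∀ x y : V, b x y = - b y x := fun x y => by simpa using (hAlt.neg_eq y x).symm
  refine ⟨?_, ?_, ?_, ?_⟩
  · rintro Φ ⟨h1, h2⟩ u v w
    refine ⟨by rw [h2 u v], ?_⟩
    have := h1 u v w
    have hsk := hAlt.neg_eq (Φ u w) v
    linarith
  · intro Φ Ψ c u v w
    simp
  · rintro Φ Ψ _ _ h
    ext u v
    rw [← sub_eq_zero]
    apply hNd.1
    intro w
    have := h u v w
    simp only [map_sub, LinearMap.sub_apply, this, sub_self]
  · intro T hT
    set e := (b.toDual hNd).symm.toLinearMap with he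
    refine ⟨T.compr₂ e, ⟨?_, ?_⟩, ?_⟩
    · intro u v w
      have h1 : b (T.compr₂ e u v) w = T u v w :=
        LinearMap.BilinForm.apply_toDual_symm_apply (hB := hNd) (f := T u v) (v := w)
      have h2 : b (T.compr₂ e u w) v = T u w v :=
        LinearMap.BilinForm.apply_toDual_symm_apply (hB := hNd) (f := T u w) (v := v)
      have hsk := hAlt.neg_eq (T.compr₂ e u w) v
      have := (hT u v w).2
      simp only [LinearMap.compr₂_apply] at h1 h2 hsk ⊢
      linarith
    · intro v w
      simp only [LinearMap.compr₂_apply]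
      congr 1
      ext x
      exact (hT v w x).1
    · intro u v w
      exact LinearMap.BilinForm.apply_toDual_symm_apply (hB := hNd) (f := T u v) (v := w)
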